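/- Let G be a group and φ : G → ℂ a positive definite function with φ(e) = 1 such that some power is uniformly close to an indicator: for some k ∈ ℕ, ‖φ^k − 𝟙_{H}‖_∞ < 1 where H = {x : φ(x) = 1}. Then for every x ∈ G with |φ(x)| = 1 one has φ(x) = 1; that is, E_φ = H_φ. -/

import Mathlib

open scoped ComplexOrder

/-- Positive definiteness of `φ : G → ℂ` on a group. -/
def IsPositiveDefinite {G : Type*} [Group G] (φ : G → ℂ) : Prop :=
  ∀ (n : ℕ) (x : Fin n → G) (c : Fin n → ℂ),
    0 ≤ ∑ i, ∑ j, c i * (starRingEnd ℂ) (c j) * φ ((x j)⁻¹ * x i)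

theorem stmt_13 {G : Type*} [Group G] (φ : G → ℂ) (hφ : IsPositiveDefinite φ)
    (he : φ 1 = 1)
    (hso : ∃ k : ℕ, ∃ C : ℝ, C < 1 ∧ ∀ x : G,
      ‖(φ x) ^ k - Set.indicator {x : G | φ x = 1} (fun _ => (1 : ℂ)) x‖ ≤ C) :
    ∀ x : G, ‖φ x‖ = 1 → φ x = 1 := by
  obtain ⟨k, C, hC, h⟩ := hso
  intro x hx
  by_contra hne
  have hx' := h x
  rw [Set.indicator_of_notMem (by simpa using hne), sub_zero, norm_pow, hx,
    one_pow] at hx'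
  linarith
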